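/- arXiv:1402.1308 — 3 statements merged into one kernel-verified Lean document; each statement's English description precedes it below -/
import Mathlib

section
/- Let Q be a Young function and let {H_m}_{m≥1} be a sequence of linear operators from L_Q(I^d) to L^0(I^d), each continuous from the ‖·‖_{L_Q}-topology to the topology of convergence in Lebesgue measure. Suppose there exist functions ξ_k with ‖ξ_k‖_{L_Q} ≤ 1, and sequences of integers m_k → ∞ and ν_k → ∞, such that inf_k mes{x ∈ I^d : |H_{m_k}ξ_k(x)| > ν_k} > 0. Then the set of f ∈ L_Q(I^d) for which the sequence {H_m f} converges in Lebesgue measure to an almost everywhere finite function is of first Baire category (meager) in (L_Q(I^d), ‖·‖_{L_Q}). -/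
open MeasureTheory Filter

noncomputable section

/-- The unit cube `[0,1)^d`. -/
def unitCube (d : ℕ) : Set (Fin d → ℝ) := Set.univ.pi fun _ => Set.Ico (0:ℝ) 1

/-- Lebesgue measure restricted to the unit cube `[0,1)^d`. -/
def cubeMeasure (d : ℕ) : Measure (Fin d → ℝ) := volume.restrict (unitCube d)

/-- The `1`-periodic function equal to `1` on `[0,1/2)` and to `-1` on `[1/2,1)`. -/
def r0 (x : ℝ) : ℝ := if Int.fract x < 1/2 then 1 else -1

/-- The Rademacher functions. -/
def rademacher (n : ℕ) (x : ℝ) : ℝ := r0 (2 ^ n * x)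

/-- The Walsh functions (in Paley enumeration, via binary digits). -/
def walsh (n : ℕ) (x : ℝ) : ℝ :=
  ∏ k ∈ Finset.range (n + 1), if n.testBit k then rademacher k x else 1

/-- The Walsh–Dirichlet kernel `D_n`. -/
def dirichletKernel (n : ℕ) (x : ℝ) : ℝ := ∑ k ∈ Finset.range n, walsh k x

/-- `l_n = ∑_{k=1}^{n-1} 1/k`. -/
def logSum (n : ℕ) : ℝ := ∑ k ∈ Finset.Icc 1 (n - 1), (1 : ℝ) / k

/-- The Nörlund logarithmic kernel `F_n`. -/
def FKernel (n : ℕ) (u : ℝ) : ℝ :=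
  (1 / logSum n) * ∑ i ∈ Finset.Ico 1 n, dirichletKernel (n - i) u / i

/-- The Riesz logarithmic kernel `G_n`. -/
def GKernel (n : ℕ) (u : ℝ) : ℝ :=
  (1 / logSum n) * ∑ i ∈ Finset.Ico 1 n, dirichletKernel i u / i

/-- Walsh–Fourier coefficient of `f` on the unit cube. -/
def walshCoef {d : ℕ} (f : (Fin d → ℝ) → ℝ) (j : Fin d → ℕ) : ℝ :=
  ∫ x, f x * ∏ i, walsh (j i) (x i) ∂(cubeMeasure d)

/-- Rectangular partial sums of the multiple Walsh–Fourier series. -/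
def rectPartialSum {d : ℕ} (f : (Fin d → ℝ) → ℝ) (N : Fin d → ℕ) (x : Fin d → ℝ) : ℝ :=
  ∑ j ∈ Fintype.piFinset (fun i => Finset.range (N i)),
    walshCoef f j * ∏ i, walsh (j i) (x i)

/-- The mixed logarithmic means `(L_{n_B} ∘ R_{n_{B'}})(f)`. -/
def mixedLogMean {d : ℕ} (B : Finset (Fin d)) (f : (Fin d → ℝ) → ℝ)
    (n : Fin d → ℕ) (x : Fin d → ℝ) : ℝ :=
  (∏ j, logSum (n j))⁻¹ *
    ∑ i ∈ Fintype.piFinset (fun j => Finset.Ico 1 (n j)),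
      rectPartialSum f (fun j => if j ∈ B then n j - i j else i j) x / ∏ j, (i j : ℝ)

/-- A Young function: convex, continuous, even, vanishing at `0`, with
`Q(u)/u → ∞` at `+∞` and `Q(u)/u → 0` at `0`. -/
structure YoungFunction where
  toFun : ℝ → ℝ
  nonneg : ∀ u, 0 ≤ toFun u
  convexOn : ConvexOn ℝ Set.univ toFun
  continuous : Continuous toFun
  even : ∀ u, toFun (-u) = toFun u
  map_zero : toFun 0 = 0
  tendsto_atTop : Tendsto (fun u => toFun u / u) atTop atTop
  tendsto_zero : Tendsto (fun u => toFun u / u) (nhdsWithin 0 {(0:ℝ)}ᶜ) (nhds 0)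

/-- The set of admissible constants `k` in the Luxemburg norm of `f`. -/
def orliczSet {d : ℕ} (Q : YoungFunction) (f : (Fin d → ℝ) → ℝ) : Set ℝ :=
  {k | 0 < k ∧ Integrable (fun x => Q.toFun (|f x| / k)) (cubeMeasure d) ∧
    ∫ x, Q.toFun (|f x| / k) ∂(cubeMeasure d) ≤ 1}

/-- `f` belongs to the Orlicz space `L_Q(I^d)`. -/
def MemOrlicz {d : ℕ} (Q : YoungFunction) (f : (Fin d → ℝ) → ℝ) : Prop :=
  Measurable f ∧ (orliczSet Q f).Nonempty

/-- The Luxemburg norm on the Orlicz space `L_Q(I^d)`. -/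
def orliczNorm {d : ℕ} (Q : YoungFunction) (f : (Fin d → ℝ) → ℝ) : ℝ :=
  sInf (orliczSet Q f)

/-- `p_n = 2^{2n} + 2^{2n-2} + ⋯ + 2^0`. -/
def pIdx (n : ℕ) : ℕ := ∑ k ∈ Finset.range (n + 1), 4 ^ k

/-- `m̃ = ⌊ l_{p_{⌊m/2⌋}-1}/16 - 2^15 ⌋`. -/
def mTilde (m : ℕ) : ℤ := ⌊logSum (pIdx (m / 2) - 1) / 16 - 2 ^ 15⌋

/-- `m₀ = min{m : m̃ > 1}`. -/
def m₀ : ℕ := sInf {m : ℕ | 1 < mTilde m}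

/-- The set `Ω_n`. -/
def Omega (n : ℕ) : Set ℝ :=
  ⋃ m ∈ Finset.Icc n (2 * n),
    Set.Ico ((2:ℝ) ^ (-(m:ℤ) - 1) + (2:ℝ) ^ (-(m:ℤ) - mTilde m)) ((2:ℝ) ^ (-(m:ℤ)))

/-- `k`-th binary digit of `x` (the expansion not terminating in `1`'s). -/
def binDigit (k : ℕ) (x : ℝ) : ℕ := (⌊x * 2 ^ (k + 1)⌋).toNat % 2

/-- Dyadic addition on `[0,1)`. -/
def dyadicAdd (x t : ℝ) : ℝ :=
  ∑' k : ℕ, |(binDigit k x : ℝ) - (binDigit k t : ℝ)| / 2 ^ (k + 1)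

/-- Dyadic convolution `f ∗ K` on `[0,1)`. -/
def dyadicConv (f K : ℝ → ℝ) (x : ℝ) : ℝ :=
  ∫ t in Set.Ico (0:ℝ) 1, f t * K (dyadicAdd x t)

/-- Lebesgue measure restricted to `[0,1)`. -/
def unitMeasure : Measure ℝ := volume.restrict (Set.Ico (0:ℝ) 1)

/-- A set `A ⊆ L_Q(I^d)` is nowhere dense w.r.t. the Luxemburg norm. -/
def OrliczNowhereDense {d : ℕ} (Q : YoungFunction) (A : Set ((Fin d → ℝ) → ℝ)) : Prop :=
  ∀ f, MemOrlicz Q f → ∀ ε > 0, ∃ g, MemOrlicz Q g ∧ ∃ δ > 0,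
    (∀ h, MemOrlicz Q h → orliczNorm Q (h - g) < δ → orliczNorm Q (h - f) < ε) ∧
    (∀ h, MemOrlicz Q h → orliczNorm Q (h - g) < δ → h ∉ A)

/-- A set `A ⊆ L_Q(I^d)` is of first Baire category (meager) w.r.t. the Luxemburg norm. -/
def OrliczMeager {d : ℕ} (Q : YoungFunction) (A : Set ((Fin d → ℝ) → ℝ)) : Prop :=
  ∃ F : ℕ → Set ((Fin d → ℝ) → ℝ), (∀ k, OrliczNowhereDense Q (F k)) ∧ A ⊆ ⋃ k, F k

instance cubeFinite (d : ℕ) : IsFiniteMeasure (cubeMeasure d) := by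
  constructor
  rw [cubeMeasure, Measure.restrict_apply_univ, unitCube, volume_pi_pi]
  simp [Real.volume_Ico]

lemma Q_mono (Q : YoungFunction) {u v : ℝ} (hu : 0 ≤ u) (huv : u ≤ v) :
    Q.toFun u ≤ Q.toFun v := by
  rcases eq_or_lt_of_le (hu.trans huv) with h | hv
  · have : u = 0 := le_antisymm (huv.trans h.symm.le) hu
    rw [this, ← h, Q.map_zero]
  · have ht0 : 0 ≤ u / v := div_nonneg hu hv.le
    have ht1 : u / v ≤ 1 := div_le_one_of_le₀ huv hv.le
    have this : Q.toFun ((u/v) • v + (1-(u/v)) • (0:ℝ)) ≤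
        (u/v) • Q.toFun v + (1-(u/v)) • Q.toFun 0 :=
      Q.convexOn.2 (Set.mem_univ v) (Set.mem_univ 0) ht0 (by linarith) (by ring)
    simp only [smul_eq_mul, mul_zero, add_zero, Q.map_zero] at this
    rw [div_mul_cancel₀ _ hv.ne'] at this
    nlinarith [Q.nonneg v]

lemma orliczSet_neg {d : ℕ} (Q : YoungFunction) (f : (Fin d → ℝ) → ℝ) :
    orliczSet Q (-f) = orliczSet Q f := by
  have : ∀ k : ℝ, (fun x => Q.toFun (|(-f) x| / k)) = fun x => Q.toFun (|f x| / k) := by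
    intro k; funext x; simp
  unfold orliczSet
  ext k
  simp only [Set.mem_setOf_eq, this k]

lemma orliczSet_congr_abs {d : ℕ} (Q : YoungFunction) {f g : (Fin d → ℝ) → ℝ}
    (h : ∀ x, |f x| = |g x|) : orliczSet Q f = orliczSet Q g := by
  have : ∀ k : ℝ, (fun x => Q.toFun (|f x| / k)) = fun x => Q.toFun (|g x| / k) := by
    intro k; funext x; rw [h x]
  unfold orliczSet
  ext k
  simp only [Set.mem_setOf_eq, this k]

lemma orliczSet_bddBelow {d : ℕ} (Q : YoungFunction) (f : (Fin d → ℝ) → ℝ) :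
    BddBelow (orliczSet Q f) := ⟨0, fun _ hx => hx.1.le⟩

lemma orliczNorm_nonneg {d : ℕ} (Q : YoungFunction) (f : (Fin d → ℝ) → ℝ) :
    0 ≤ orliczNorm Q f := Real.sInf_nonneg (fun _ hx => hx.1.le)

lemma orliczSet_add {d : ℕ} (Q : YoungFunction) {a b : (Fin d → ℝ) → ℝ}
    (ha : Measurable a) (hb : Measurable b) {ka kb : ℝ}
    (hka : ka ∈ orliczSet Q a) (hkb : kb ∈ orliczSet Q b) :
    ka + kb ∈ orliczSet Q (a + b) := by
  obtain ⟨hka0, hkaI, hkaL⟩ := hka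
  obtain ⟨hkb0, hkbI, hkbL⟩ := hkb
  have hs0 : (0:ℝ) < ka + kb := by linarith
  set s := ka + kb with hs
  have hpw : ∀ x, Q.toFun (|(a + b) x| / s) ≤
      (ka / s) * Q.toFun (|a x| / ka) + (kb / s) * Q.toFun (|b x| / kb) := by
    intro x
    have h1 : |(a + b) x| / s ≤ (|a x| + |b x|) / s := by
      gcongr
      exact abs_add_le _ _
    have h2 : (|a x| + |b x|) / s = (ka / s) * (|a x| / ka) + (kb / s) * (|b x| / kb) := by
      field_simp
    have h3 : Q.toFun ((ka/s) • (|a x| / ka) + (kb/s) • (|b x| / kb)) ≤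
        (ka/s) • Q.toFun (|a x| / ka) + (kb/s) • Q.toFun (|b x| / kb) :=
      Q.convexOn.2 (Set.mem_univ (|a x| / ka)) (Set.mem_univ (|b x| / kb))
        (by positivity) (by positivity) (by field_simp; exact hs.symm)
    simp only [smul_eq_mul] at h3
    calc Q.toFun (|(a + b) x| / s) ≤ Q.toFun ((|a x| + |b x|) / s) :=
          Q_mono Q (by positivity) h1
      _ = Q.toFun ((ka / s) * (|a x| / ka) + (kb / s) * (|b x| / kb)) := by rw [h2]
      _ ≤ (ka / s) * Q.toFun (|a x| / ka) + (kb / s) * Q.toFun (|b x| / kb) := h3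
  have hφI : Integrable (fun x => (ka / s) * Q.toFun (|a x| / ka)
      + (kb / s) * Q.toFun (|b x| / kb)) (cubeMeasure d) :=
    (hkaI.const_mul _).add (hkbI.const_mul _)
  have hmeas : AEStronglyMeasurable (fun x => Q.toFun (|(a + b) x| / s)) (cubeMeasure d) :=
    (Q.continuous.measurable.comp (((ha.add hb).abs).div_const s)).aestronglyMeasurable
  have hI : Integrable (fun x => Q.toFun (|(a + b) x| / s)) (cubeMeasure d) := by
    refine hφI.mono' hmeas (Filter.Eventually.of_forall fun x => ?_)
    rw [Real.norm_eq_abs, abs_of_nonneg (Q.nonneg _)]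
    exact hpw x
  refine ⟨hs0, hI, ?_⟩
  calc ∫ x, Q.toFun (|(a + b) x| / s) ∂(cubeMeasure d)
      ≤ ∫ x, ((ka / s) * Q.toFun (|a x| / ka) + (kb / s) * Q.toFun (|b x| / kb))
          ∂(cubeMeasure d) := integral_mono hI hφI hpw
    _ = (ka / s) * ∫ x, Q.toFun (|a x| / ka) ∂(cubeMeasure d)
        + (kb / s) * ∫ x, Q.toFun (|b x| / kb) ∂(cubeMeasure d) := by
        rw [integral_add (hkaI.const_mul _) (hkbI.const_mul _),
          integral_const_mul, integral_const_mul]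
    _ ≤ (ka / s) * 1 + (kb / s) * 1 := by
        gcongr <;> positivity
    _ = 1 := by field_simp; exact hs.symm

lemma MemOrlicz.add' {d : ℕ} {Q : YoungFunction} {a b : (Fin d → ℝ) → ℝ}
    (ha : MemOrlicz Q a) (hb : MemOrlicz Q b) : MemOrlicz Q (a + b) := by
  obtain ⟨ka, hka⟩ := ha.2
  obtain ⟨kb, hkb⟩ := hb.2
  exact ⟨ha.1.add hb.1, ⟨ka + kb, orliczSet_add Q ha.1 hb.1 hka hkb⟩⟩

lemma MemOrlicz.neg' {d : ℕ} {Q : YoungFunction} {a : (Fin d → ℝ) → ℝ}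
    (ha : MemOrlicz Q a) : MemOrlicz Q (-a) := by
  refine ⟨ha.1.neg, ?_⟩
  rw [orliczSet_neg]
  exact ha.2

lemma MemOrlicz.sub' {d : ℕ} {Q : YoungFunction} {a b : (Fin d → ℝ) → ℝ}
    (ha : MemOrlicz Q a) (hb : MemOrlicz Q b) : MemOrlicz Q (a - b) := by
  rw [sub_eq_add_neg]
  exact ha.add' hb.neg'

lemma orliczSet_smul {d : ℕ} (Q : YoungFunction) {ξ : (Fin d → ℝ) → ℝ} {c k : ℝ}
    (hc : 0 < c) (hk : k ∈ orliczSet Q ξ) : c * k ∈ orliczSet Q (c • ξ) := by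
  have heq : (fun x => Q.toFun (|(c • ξ) x| / (c * k))) = fun x => Q.toFun (|ξ x| / k) := by
    funext x
    rw [Pi.smul_apply, smul_eq_mul, abs_mul, abs_of_pos hc, mul_div_mul_left _ _ hc.ne']
  exact ⟨mul_pos hc hk.1, by rw [heq]; exact hk.2.1, by rw [heq]; exact hk.2.2⟩

lemma MemOrlicz.smul' {d : ℕ} {Q : YoungFunction} {ξ : (Fin d → ℝ) → ℝ} {c : ℝ}
    (hc : 0 < c) (hξ : MemOrlicz Q ξ) : MemOrlicz Q (c • ξ) := by
  obtain ⟨k, hk⟩ := hξ.2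
  exact ⟨hξ.1.const_smul c, ⟨c * k, orliczSet_smul Q hc hk⟩⟩

lemma my_le_of_forall_pos {a b : ℝ} (h : ∀ η : ℝ, 0 < η → a ≤ b + η) : a ≤ b := by
  by_contra hc
  push_neg at hc
  have := h ((a - b) / 2) (by linarith)
  linarith

lemma orliczNorm_add_le {d : ℕ} {Q : YoungFunction} {a b : (Fin d → ℝ) → ℝ}
    (ha : MemOrlicz Q a) (hb : MemOrlicz Q b) :
    orliczNorm Q (a + b) ≤ orliczNorm Q a + orliczNorm Q b := by
  refine my_le_of_forall_pos fun η hη => ?_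
  obtain ⟨ka, hka, hka'⟩ := exists_lt_of_csInf_lt ha.2
    (lt_add_of_pos_right _ (half_pos hη) : orliczNorm Q a < orliczNorm Q a + η / 2)
  obtain ⟨kb, hkb, hkb'⟩ := exists_lt_of_csInf_lt hb.2
    (lt_add_of_pos_right _ (half_pos hη) : orliczNorm Q b < orliczNorm Q b + η / 2)
  have hmem := orliczSet_add Q ha.1 hb.1 hka hkb
  have h4 : orliczNorm Q (a + b) ≤ ka + kb := csInf_le (orliczSet_bddBelow Q (a + b)) hmem
  linarith

lemma orliczNorm_smul_le {d : ℕ} {Q : YoungFunction} {ξ : (Fin d → ℝ) → ℝ} {c : ℝ}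
    (hc : 0 < c) (hξ : MemOrlicz Q ξ) (h1 : orliczNorm Q ξ ≤ 1) :
    orliczNorm Q (c • ξ) ≤ c := by
  refine my_le_of_forall_pos fun η hη => ?_
  obtain ⟨k, hk, hk'⟩ := exists_lt_of_csInf_lt hξ.2
    (lt_of_le_of_lt h1 (lt_add_of_pos_right _ (div_pos hη hc)))
  have hmem := orliczSet_smul Q hc hk
  have h4 : orliczNorm Q (c • ξ) ≤ c * k := csInf_le (orliczSet_bddBelow Q (c • ξ)) hmem
  have h2 : c * k < c * (1 + η / c) := by
    exact mul_lt_mul_of_pos_left hk' hc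
  have h3 : c * (1 + η / c) = c + η := by field_simp
  linarith
lemma exists_nat_bound {α : Type*} {mα : MeasurableSpace α} (μ : Measure α) [IsFiniteMeasure μ]
    {φ : α → ℝ} (hφ : Measurable φ) {c : ENNReal} (hc : 0 < c) :
    ∃ n : ℕ, μ {x | (n:ℝ) < |φ x|} ≤ c := by
  set s : ℕ → Set α := fun n => {x | (n:ℝ) < |φ x|} with hs
  have hms : ∀ n : ℕ, MeasureTheory.NullMeasurableSet (s n) μ := fun n =>
    (measurableSet_lt measurable_const hφ.abs).nullMeasurableSet
  have hanti : Antitone s := by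
    intro i j hij x hx
    simp only [hs, Set.mem_setOf_eq] at hx ⊢
    exact lt_of_le_of_lt (Nat.cast_le.mpr hij) hx
  have hint : ⋂ n, s n = ∅ := by
    ext x
    simp only [Set.mem_iInter, hs, Set.mem_setOf_eq, Set.mem_empty_iff_false, iff_false]
    push_neg
    obtain ⟨n, hn⟩ := exists_nat_gt |φ x|
    exact ⟨n, hn.le⟩
  have htend := tendsto_measure_iInter_atTop hms hanti ⟨0, measure_ne_top μ _⟩
  rw [hint, measure_empty] at htend
  obtain ⟨n, hn⟩ := (htend.eventually_lt_const hc).exists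
  exact ⟨n, hn.le⟩

lemma measure_limit_bound {α : Type*} {mα : MeasurableSpace α} {μ : Measure α}
    {gs : ℕ → α → ℝ} {G : α → ℝ} (h : TendstoInMeasure μ gs atTop G) {n : ℝ} {B : ENNReal}
    (hb : ∀ j, μ {x | n < |gs j x|} ≤ B) : μ {x | n + 1 < |G x|} ≤ B := by
  have key : ∀ j : ℕ, μ {x | n + 1 < |G x|} ≤ B + μ {x | (1:ℝ) ≤ dist (gs j x) (G x)} := by
    intro j
    have hsub : {x | n + 1 < |G x|} ⊆
        {x | n < |gs j x|} ∪ {x | (1:ℝ) ≤ dist (gs j x) (G x)} := by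
      intro x hx
      by_cases hd : (1:ℝ) ≤ dist (gs j x) (G x)
      · exact Or.inr hd
      · left
        push_neg at hd
        rw [Real.dist_eq] at hd
        simp only [Set.mem_setOf_eq] at hx ⊢
        have h2 := abs_sub_abs_le_abs_sub (G x) (gs j x)
        rw [abs_sub_comm] at h2
        linarith
    calc μ {x | n + 1 < |G x|}
        ≤ μ ({x | n < |gs j x|} ∪ {x | (1:ℝ) ≤ dist (gs j x) (G x)}) := measure_mono hsub
      _ ≤ μ {x | n < |gs j x|} + μ {x | (1:ℝ) ≤ dist (gs j x) (G x)} := measure_union_le _ _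
      _ ≤ B + μ {x | (1:ℝ) ≤ dist (gs j x) (G x)} := add_le_add (hb j) le_rfl
  have htend : Tendsto (fun j => B + μ {x | (1:ℝ) ≤ dist (gs j x) (G x)}) atTop (nhds (B + 0)) :=
    tendsto_const_nhds.add (by simpa only [edist_dist, ENNReal.one_le_ofReal] using h 1 one_pos)
  rw [add_zero] at htend
  exact ge_of_tendsto' htend key


/-- Lemma (GGT). If linear, measure-continuous operators `H_m : L_Q → L^0`
admit unit-ball functions `ξ_k` with `mes{|H_{m_k} ξ_k| > ν_k}` bounded below, then the set
of `f` for which `{H_m f}` converges in measure to an a.e. finite function is meager in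
`L_Q(I^d)`. -/
theorem stmt9 (d : ℕ) (hd : 1 ≤ d) (Q : YoungFunction)
    (H : ℕ → ((Fin d → ℝ) → ℝ) → ((Fin d → ℝ) → ℝ))
    (Hmeas : ∀ m f, MemOrlicz Q f → Measurable (H m f))
    (Hadd : ∀ m f g, MemOrlicz Q f → MemOrlicz Q g → H m (f + g) = H m f + H m g)
    (Hsmul : ∀ m (c : ℝ) (f : (Fin d → ℝ) → ℝ), MemOrlicz Q f → H m (c • f) = c • H m f)
    (Hcont : ∀ m (fs : ℕ → (Fin d → ℝ) → ℝ) (g : (Fin d → ℝ) → ℝ),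
      (∀ k, MemOrlicz Q (fs k)) → MemOrlicz Q g →
      Tendsto (fun k => orliczNorm Q (fs k - g)) atTop (nhds 0) →
      TendstoInMeasure (cubeMeasure d) (fun k => H m (fs k)) atTop (H m g))
    (ξ : ℕ → (Fin d → ℝ) → ℝ) (hξ : ∀ k, MemOrlicz Q (ξ k) ∧ orliczNorm Q (ξ k) ≤ 1)
    (mk nk : ℕ → ℕ) (hmk : Tendsto mk atTop atTop) (hnk : Tendsto nk atTop atTop)
    (ε₀ : ℝ) (hε₀ : 0 < ε₀)
    (hinf : ∀ k, ε₀ ≤ ((cubeMeasure d) {x | (nk k : ℝ) < |H (mk k) (ξ k) x|}).toReal) :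
    OrliczMeager Q {f | MemOrlicz Q f ∧ ∃ g : (Fin d → ℝ) → ℝ, Measurable g ∧
      TendstoInMeasure (cubeMeasure d) (fun m => H m f) atTop g} := by

  classical
  have hc4pos : (0:ENNReal) < ENNReal.ofReal (ε₀/4) := ENNReal.ofReal_pos.mpr (by linarith)
  have hc8pos : (0:ENNReal) < ENNReal.ofReal (ε₀/8) := ENNReal.ofReal_pos.mpr (by linarith)
  refine ⟨fun n => {f | MemOrlicz Q f ∧
      ∀ m, cubeMeasure d {x | (n:ℝ) < |H m f x|} ≤ ENNReal.ofReal (ε₀/4)}, ?_, ?_⟩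
  · -- each piece is nowhere dense
    intro n f hf ε hε
    by_cases hcase : ∃ f₀, (MemOrlicz Q f₀ ∧
        ∀ m, cubeMeasure d {x | (n:ℝ) < |H m f₀ x|} ≤ ENNReal.ofReal (ε₀/4)) ∧
        orliczNorm Q (f₀ - f) < ε/4
    · obtain ⟨f₀, hf₀F, hf₀f⟩ := hcase
      have hf₀ : MemOrlicz Q f₀ := hf₀F.1
      have hc : (0:ℝ) < ε/4 := by linarith
      obtain ⟨k, hk⟩ := (hnk.eventually_ge_atTop ⌈(2*(n:ℝ)+3)/(ε/4)⌉₊).exists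
      have hnkk : 2*(n:ℝ) + 2 < (ε/4) * nk k := by
        have h1 : ((2*(n:ℝ)+3)/(ε/4)) ≤ (nk k : ℝ) :=
          le_trans (Nat.le_ceil _) (by exact_mod_cast hk)
        have h2 := (div_le_iff₀ hc).mp h1
        nlinarith
      have hξk : MemOrlicz Q (ξ k) := (hξ k).1
      set g := f₀ + (ε/4) • ξ k with hgdef
      have hg : MemOrlicz Q g := hf₀.add' (MemOrlicz.smul' hc hξk)
      refine ⟨g, hg, ?_⟩
      have hB : ∃ δ : ℝ, 0 < δ ∧ δ ≤ ε/4 ∧ ∀ h, MemOrlicz Q h → orliczNorm Q (h - g) < δ →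
          ¬(MemOrlicz Q h ∧
            ∀ m, cubeMeasure d {x | (n:ℝ) < |H m h x|} ≤ ENNReal.ofReal (ε₀/4)) := by
        by_contra hB
        push_neg at hB
        have hchoice : ∀ j : ℕ, ∃ h, MemOrlicz Q h ∧ orliczNorm Q (h - g) < 1/((j:ℝ)+1) ∧
            (MemOrlicz Q h ∧
              ∀ m, cubeMeasure d {x | (n:ℝ) < |H m h x|} ≤ ENNReal.ofReal (ε₀/4)) := by
          intro j
          obtain ⟨h, h1, h2, h3⟩ := hB (min (ε/4) (1/((j:ℝ)+1)))
            (lt_min hc (by positivity)) (min_le_left _ _)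
          exact ⟨h, h1, lt_of_lt_of_le h2 (min_le_right _ _), h3⟩
        choose hs h1 h2 h3 using hchoice
        have htd : Tendsto (fun j => orliczNorm Q (hs j - g)) atTop (nhds 0) := by
          refine tendsto_of_tendsto_of_tendsto_of_le_of_le tendsto_const_nhds
            tendsto_one_div_add_atTop_nhds_zero_nat
            (fun j => orliczNorm_nonneg Q _) (fun j => (h2 j).le)
        have him := Hcont (mk k) hs g h1 hg htd
        have hgbound : cubeMeasure d {x | (n:ℝ) + 1 < |H (mk k) g x|} ≤
            ENNReal.ofReal (ε₀/4) :=
          measure_limit_bound him (fun j => (h3 j).2 (mk k))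
        have hf₀bound := hf₀F.2 (mk k)
        have hHg : H (mk k) g = H (mk k) f₀ + (ε/4) • H (mk k) (ξ k) := by
          rw [hgdef, Hadd (mk k) f₀ ((ε/4) • ξ k) hf₀ (MemOrlicz.smul' hc hξk),
            Hsmul (mk k) (ε/4) (ξ k) hξk]
        have hsub : {x | (nk k : ℝ) < |H (mk k) (ξ k) x|} ⊆
            {x | (n:ℝ) + 1 < |H (mk k) g x|} ∪ {x | (n:ℝ) < |H (mk k) f₀ x|} := by
          intro x hx
          by_contra hcon
          simp only [Set.mem_union, Set.mem_setOf_eq, not_or, not_lt] at hcon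
          obtain ⟨hg', hf'⟩ := hcon
          have hx' : (nk k : ℝ) < |H (mk k) (ξ k) x| := hx
          have heq : H (mk k) g x = H (mk k) f₀ x + (ε/4) * H (mk k) (ξ k) x := by
            rw [hHg]; simp
          have h5 : (ε/4) * |H (mk k) (ξ k) x| ≤ |H (mk k) g x| + |H (mk k) f₀ x| := by
            have h6 : (ε/4) * H (mk k) (ξ k) x = H (mk k) g x - H (mk k) f₀ x := by
              rw [heq]; ring
            calc (ε/4) * |H (mk k) (ξ k) x| = |(ε/4) * H (mk k) (ξ k) x| := by
                  rw [abs_mul, abs_of_pos hc]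
              _ = |H (mk k) g x - H (mk k) f₀ x| := by rw [h6]
              _ ≤ |H (mk k) g x| + |H (mk k) f₀ x| := abs_sub _ _
          have h7 : (ε/4) * (nk k : ℝ) < (ε/4) * |H (mk k) (ξ k) x| :=
            mul_lt_mul_of_pos_left hx' hc
          linarith
        have hεle : ENNReal.ofReal ε₀ ≤
            cubeMeasure d {x | (nk k : ℝ) < |H (mk k) (ξ k) x|} :=
          ENNReal.ofReal_le_of_le_toReal (hinf k)
        have hfin : ENNReal.ofReal ε₀ ≤ ENNReal.ofReal (ε₀/4) + ENNReal.ofReal (ε₀/4) :=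
          hεle.trans ((measure_mono hsub).trans ((measure_union_le _ _).trans
            (add_le_add hgbound hf₀bound)))
        rw [← ENNReal.ofReal_add (by linarith) (by linarith)] at hfin
        have := (ENNReal.ofReal_le_ofReal_iff (by linarith)).mp hfin
        linarith
      obtain ⟨δ, hδ0, hδε, hδb⟩ := hB
      refine ⟨δ, hδ0, fun h hh hhg => ?_, hδb⟩
      have t1 : orliczNorm Q (h - f) ≤ orliczNorm Q (h - g) + orliczNorm Q (g - f) := by
        have heq2 : h - f = (h - g) + (g - f) := (sub_add_sub_cancel h g f).symm
        rw [heq2]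
        exact orliczNorm_add_le (hh.sub' hg) (hg.sub' hf)
      have t2 : g - f = (f₀ - f) + (ε/4) • ξ k := by
        rw [hgdef]; exact add_sub_right_comm f₀ ((ε/4) • ξ k) f
      have t3 : orliczNorm Q (g - f) ≤ ε/4 + ε/4 := by
        rw [t2]
        exact (orliczNorm_add_le (hf₀.sub' hf) (MemOrlicz.smul' hc hξk)).trans
          (add_le_add hf₀f.le (orliczNorm_smul_le hc hξk (hξ k).2))
      linarith
    · push_neg at hcase
      refine ⟨f, hf, ε/4, by linarith, fun h hh hhg => by linarith,
        fun h hh hhg hmem => absurd hhg (not_lt.mpr (hcase h hmem))⟩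
  · -- coverage
    intro f hfA
    obtain ⟨hf, g, hgmeas, htim⟩ := hfA
    obtain ⟨n₀, hn₀⟩ := exists_nat_bound (cubeMeasure d) hgmeas hc8pos
    obtain ⟨M, hM⟩ := eventually_atTop.mp ((htim 1 one_pos).eventually_lt_const hc8pos)
    have hms : ∀ m, ∃ nm : ℕ,
        cubeMeasure d {x | (nm:ℝ) < |H m f x|} ≤ ENNReal.ofReal (ε₀/4) := fun m =>
      exists_nat_bound (cubeMeasure d) (Hmeas m f hf) hc4pos
    choose nm hnm using hms
    set N := max (n₀ + 1) ((Finset.range M).sup nm) with hN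
    refine Set.mem_iUnion.mpr ⟨N, hf, fun m => ?_⟩
    by_cases hm : m < M
    · have hle : nm m ≤ N := le_trans (Finset.le_sup (Finset.mem_range.mpr hm))
        (le_max_right _ _)
      refine le_trans (measure_mono ?_) (hnm m)
      intro x hx
      simp only [Set.mem_setOf_eq] at hx ⊢
      exact lt_of_le_of_lt (show ((nm m : ℕ):ℝ) ≤ (N:ℝ) from Nat.cast_le.mpr hle) hx
    · push_neg at hm
      have hsub : {x | (N:ℝ) < |H m f x|} ⊆
          {x | (n₀:ℝ) < |g x|} ∪ {x | (1:ℝ) ≤ dist (H m f x) (g x)} := by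
        intro x hx
        by_cases hd : (1:ℝ) ≤ dist (H m f x) (g x)
        · exact Or.inr hd
        · left
          push_neg at hd
          rw [Real.dist_eq] at hd
          simp only [Set.mem_setOf_eq] at hx ⊢
          have h0 : (n₀:ℝ) + 1 ≤ (N:ℝ) := by exact_mod_cast le_max_left (n₀+1) _
          have h2 := abs_sub_abs_le_abs_sub (H m f x) (g x)
          linarith
      calc cubeMeasure d {x | (N:ℝ) < |H m f x|}
          ≤ cubeMeasure d ({x | (n₀:ℝ) < |g x|} ∪ {x | (1:ℝ) ≤ dist (H m f x) (g x)}) :=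
            measure_mono hsub
        _ ≤ cubeMeasure d {x | (n₀:ℝ) < |g x|}
            + cubeMeasure d {x | (1:ℝ) ≤ dist (H m f x) (g x)} := measure_union_le _ _
        _ ≤ ENNReal.ofReal (ε₀/8) + ENNReal.ofReal (ε₀/8) := add_le_add hn₀ (by simpa only [edist_dist, ENNReal.one_le_ofReal] using (hM m hm).le)
        _ = ENNReal.ofReal (ε₀/4) := by
            rw [← ENNReal.ofReal_add (by linarith) (by linarith)]
            congr 1
            ring

end
end

section
/- Let Φ be a Young function and let φ : [0,∞) → [0,∞) be a measurable function with φ(x)/Φ(x) → 0 as x → +∞. Then there exist a Young function ω and a constant c ≥ 0 such that ω(x)/Φ(x) → 0 as x → +∞ and ω(x) ≥ φ(x) for all x ≥ c. -/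
open MeasureTheory Filter

noncomputable section

lemma aux_sec_in (f : ℝ → ℝ) (hf : ConvexOn ℝ Set.univ f) {a b y : ℝ} (hab : a < b)
    (h1 : a ≤ y) (h2 : y ≤ b) : f y ≤ f a + (f b - f a) / (b - a) * (y - a) := by
  have hba : (0:ℝ) < b - a := by linarith
  set t : ℝ := (y - a) / (b - a) with ht
  have ht0 : 0 ≤ t := div_nonneg (by linarith) hba.le
  have ht1 : t ≤ 1 := by rw [ht, div_le_one hba]; linarith
  have hcomb := hf.2 (Set.mem_univ a) (Set.mem_univ b) (by linarith : (0:ℝ) ≤ 1 - t) ht0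
    (by ring)
  have hy : (1 - t) • a + t • b = y := by
    simp only [smul_eq_mul]
    rw [ht]
    linear_combination div_mul_cancel₀ (y - a) hba.ne'
  rw [hy] at hcomb
  have : (1 - t) • f a + t • f b = f a + (f b - f a) / (b - a) * (y - a) := by
    simp only [smul_eq_mul, ht]; ring
  linarith [hcomb, this.ge, this.le]

lemma aux_sec_out (f : ℝ → ℝ) (hf : ConvexOn ℝ Set.univ f) {a b y : ℝ} (hab : a < b)
    (hy : y ≤ a ∨ b ≤ y) : f a + (f b - f a) / (b - a) * (y - a) ≤ f y := by
  have hba : (0:ℝ) < b - a := by linarith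
  rcases hy with hy | hy
  · rcases eq_or_lt_of_le hy with rfl | hy
    · simp
    · have H := hf.slope_mono_adjacent (Set.mem_univ y) (Set.mem_univ b) hy hab
      rw [div_le_div_iff₀ (by linarith) hba] at H
      have e1 : (f b - f a) / (b - a) * (y - a) = -(((f b - f a) * (a - y)) / (b - a)) := by
        ring
      have h2 : (f a - f y) ≤ (f b - f a) * (a - y) / (b - a) := by
        rw [le_div_iff₀ hba]; linarith
      rw [e1]; linarith
  · rcases eq_or_lt_of_le hy with rfl | hy
    · rw [div_mul_cancel₀]
      · linarith
      · linarith
    · have H := hf.slope_mono_adjacent (Set.mem_univ a) (Set.mem_univ y) hab hy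
      rw [div_le_div_iff₀ hba (by linarith)] at H
      have e1 : (f b - f a) / (b - a) * (y - a)
          = (f b - f a) + (f b - f a) * (y - b) / (b - a) := by
        field_simp; ring
      have h2 : (f b - f a) * (y - b) / (b - a) ≤ f y - f b := by
        rw [div_le_iff₀ hba]; nlinarith [H]
      rw [e1]; linarith

lemma aux_mono (f : ℝ → ℝ) (hf : ConvexOn ℝ Set.univ f) (h0 : f 0 = 0)
    (hnn : ∀ x, 0 ≤ f x) : ∀ x y : ℝ, 0 ≤ x → x ≤ y → f x ≤ f y := by
  intro x y hx hxy
  rcases eq_or_lt_of_le hxy with rfl | hlt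
  · exact le_refl _
  · have hy : 0 < y := lt_of_le_of_lt hx hlt
    rcases eq_or_lt_of_le hx with rfl | hx
    · rw [h0]; exact hnn y
    · have := aux_sec_in f hf (a := 0) (b := y) hy (le_of_lt hx) (le_of_lt hlt)
      rw [h0] at this
      have e1 : 0 + (f y - 0) / (y - 0) * (x - 0) = f y * (x / y) := by ring
      rw [e1] at this
      have : f y * (x / y) ≤ f y * 1 :=
        mul_le_mul_of_nonneg_left (by rw [div_le_one hy]; linarith) (hnn y)
      linarith

/-- Lemma (GGT2). If `φ(x) = o(Φ(x))` as `x → ∞`, there is a Young function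
`ω` with `ω(x) = o(Φ(x))` and `ω(x) ≥ φ(x)` for `x ≥ c ≥ 0`. -/
theorem stmt10 (Φ : YoungFunction) (phi : ℝ → ℝ) (hphim : Measurable phi)
    (hphi0 : ∀ x ≥ (0:ℝ), 0 ≤ phi x)
    (h : Tendsto (fun x => phi x / Φ.toFun x) atTop (nhds 0)) :
    ∃ ω : YoungFunction, ∃ c : ℝ, 0 ≤ c ∧
      Tendsto (fun x => ω.toFun x / Φ.toFun x) atTop (nhds 0) ∧
      ∀ x ≥ c, phi x ≤ ω.toFun x := by
  set f := Φ.toFun with hfdef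
  have hf0 : ∀ x, 0 ≤ f x := Φ.nonneg
  have hfz : f 0 = 0 := Φ.map_zero
  have hconv := Φ.convexOn
  have hmono := aux_mono f hconv hfz hf0
  -- a point beyond which x ≤ f x
  obtain ⟨x₂, hx₂⟩ : ∃ x₂ : ℝ, ∀ x ≥ x₂, (1:ℝ) ≤ f x / x := by
    have := Φ.tendsto_atTop.eventually_ge_atTop (1:ℝ)
    rw [eventually_atTop] at this; exact this
  -- thresholds
  have hT : ∀ n : ℕ, ∃ T : ℝ, ∀ x ≥ T, |phi x| ≤ (1/2:ℝ)^n * f x ∧ x ≤ f x ∧ 1 ≤ x := by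
    intro n
    have h1 : ∀ᶠ x in atTop, |phi x / f x| < (1/2:ℝ)^n := by
      have habs : Tendsto (fun x => |phi x / f x|) atTop (nhds |0|) := h.abs
      rw [abs_zero] at habs
      exact habs.eventually_lt_const (by positivity)
    rw [eventually_atTop] at h1
    obtain ⟨T0, hT0⟩ := h1
    refine ⟨max T0 (max x₂ 1), fun x hx => ?_⟩
    have hx1 : (1:ℝ) ≤ x := le_trans (le_max_right x₂ 1) (le_trans (le_max_right _ _) hx)
    have hxx2 : x₂ ≤ x := le_trans (le_max_left x₂ 1) (le_trans (le_max_right _ _) hx)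
    have hxf : x ≤ f x := by
      have := hx₂ x hxx2
      rw [le_div_iff₀ (by linarith)] at this; linarith
    have hfx : 0 < f x := by linarith
    refine ⟨?_, hxf, hx1⟩
    have := hT0 x (le_trans (le_max_left _ _) hx)
    rw [abs_div, abs_of_pos hfx, div_lt_iff₀ hfx] at this
    exact this.le
  choose T hTp using hT
  -- base point
  set u0 : ℝ := T 0 with hu0def
  have hu0 : ∀ x ≥ u0, |phi x| ≤ f x ∧ x ≤ f x ∧ 1 ≤ x := by
    intro x hx
    have := hTp 0 x hx
    simpa using this
  -- step
  have hstep : ∀ x : ℝ, ∃ y : ℝ, x < y ∧ y ≤ x + 1 ∧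
      (0 < f x → f y ≤ 2 * f x ∧ (y = x + 1 ∨ f y = 2 * f x)) := by
    intro x
    by_cases hfx : 0 < f x
    · by_cases hc : f (x + 1) ≤ 2 * f x
      · exact ⟨x + 1, lt_add_one x, le_refl _, fun _ => ⟨hc, Or.inl rfl⟩⟩
      · push_neg at hc
        have hsub := intermediate_value_Icc (by linarith : x ≤ x + 1)
          (Φ.continuous.continuousOn)
        have hmem : (2 * f x) ∈ Set.Icc (f x) (f (x + 1)) := ⟨by linarith, hc.le⟩
        obtain ⟨y, hyI, hy⟩ := hsub hmem
        refine ⟨y, ?_, hyI.2, fun _ => ⟨hy.le, Or.inr hy⟩⟩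
        rcases eq_or_lt_of_le hyI.1 with rfl | hlt
        · exfalso; rw [← hfdef] at hy; linarith
        · exact hlt
    · exact ⟨x + 1, lt_add_one x, le_refl _, fun hx' => absurd hx' hfx⟩
  -- the sequence u
  set u : ℕ → ℝ := fun k => Nat.rec u0 (fun _ xk => Classical.choose (hstep xk)) k with hudef
  have huS : ∀ k, u (k+1) = Classical.choose (hstep (u k)) := fun k => rfl
  have hspec : ∀ k, u k < u (k+1) ∧ u (k+1) ≤ u k + 1 ∧
      (0 < f (u k) → f (u (k+1)) ≤ 2 * f (u k) ∧
        (u (k+1) = u k + 1 ∨ f (u (k+1)) = 2 * f (u k))) := by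
    intro k; rw [huS k]; exact Classical.choose_spec (hstep (u k))
  have humono : ∀ k, u0 ≤ u k := by
    intro k; induction k with
    | zero => exact le_refl _
    | succ n ih => exact le_trans ih (hspec n).1.le
  have hubase : ∀ k, 1 ≤ u k ∧ u k ≤ f (u k) := by
    intro k
    have := hu0 (u k) (humono k)
    exact ⟨this.2.2, this.2.1⟩
  have hupos : ∀ k, 0 < u k := fun k => lt_of_lt_of_le one_pos (hubase k).1
  have hfupos : ∀ k, 0 < f (u k) := fun k => lt_of_lt_of_le (hupos k) (hubase k).2
  have huinc : ∀ j k, j ≤ k → u j ≤ u k := by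
    intro j k hjk
    induction k with
    | zero => simp_all
    | succ n ih =>
      rcases Nat.lt_or_ge j (n+1) with hl | hg
      · exact le_trans (ih (Nat.lt_succ_iff.mp hl)) (hspec n).1.le
      · have : j = n + 1 := le_antisymm hjk hg
        subst this; exact le_refl _
  -- growth estimate
  have hu00 : u 0 = u0 := rfl
  have hkey : ∀ j : ℕ, (2:ℝ)^j ≤ f (u j) * (2:ℝ) ^ (u j - u0) := by
    intro j
    induction j with
    | zero =>
      rw [hu00, sub_self, Real.rpow_zero, mul_one, pow_zero]
      have h1 := (hubase 0).1; have h2 := (hubase 0).2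
      rw [hu00] at h1 h2; linarith
    | succ n ih =>
      have hd := (hspec n).2.2 (hfupos n)
      have hrnn : (0:ℝ) ≤ (2:ℝ) ^ (u n - u0) := (Real.rpow_pos_of_pos two_pos _).le
      rcases hd.2 with hA | hB
      · have hfle : f (u n) ≤ f (u (n+1)) := hmono _ _ (hupos n).le (hspec n).1.le
        have he : (2:ℝ) ^ (u (n+1) - u0) = (2:ℝ) ^ (u n - u0) * 2 := by
          rw [hA, show u n + 1 - u0 = (u n - u0) + 1 by ring, Real.rpow_add two_pos,
            Real.rpow_one]
        rw [he, pow_succ]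
        calc (2:ℝ)^n * 2 ≤ (f (u n) * (2:ℝ) ^ (u n - u0)) * 2 := by linarith
          _ ≤ (f (u (n+1)) * (2:ℝ) ^ (u n - u0)) * 2 := by nlinarith
          _ = f (u (n+1)) * ((2:ℝ) ^ (u n - u0) * 2) := by ring
      · have he : (2:ℝ) ^ (u n - u0) ≤ (2:ℝ) ^ (u (n+1) - u0) :=
          Real.rpow_le_rpow_of_exponent_le one_le_two (by linarith [(hspec n).1.le])
        rw [pow_succ, hB]
        have hfn := (hfupos n).le
        calc (2:ℝ)^n * 2 ≤ (f (u n) * (2:ℝ) ^ (u n - u0)) * 2 := by linarith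
          _ = 2 * f (u n) * (2:ℝ) ^ (u n - u0) := by ring
          _ ≤ 2 * f (u n) * (2:ℝ) ^ (u (n+1) - u0) := by nlinarith
  have hutop : Tendsto u atTop atTop := by
    rw [tendsto_atTop]
    intro M
    set M' := max M u0 with hM'
    obtain ⟨j₀, hj₀⟩ := pow_unbounded_of_one_lt (f M' * (2:ℝ)^(M' - u0)) (one_lt_two (α := ℝ))
    filter_upwards [eventually_ge_atTop j₀] with j hj
    by_contra hcon
    push_neg at hcon
    have h1 : u j ≤ M' := le_trans hcon.le (le_max_left _ _)
    have h2 : f (u j) ≤ f M' := hmono _ _ (hupos j).le h1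
    have h3 : (2:ℝ)^(u j - u0) ≤ (2:ℝ)^(M' - u0) :=
      Real.rpow_le_rpow_of_exponent_le one_le_two (by linarith)
    have h4 : (2:ℝ)^j₀ ≤ (2:ℝ)^j := pow_le_pow_right₀ one_le_two hj
    have h5 : f (u j) * (2:ℝ)^(u j - u0) ≤ f M' * (2:ℝ)^(M' - u0) :=
      mul_le_mul h2 h3 (Real.rpow_pos_of_pos two_pos _).le (hf0 M')
    linarith [hkey j]
  -- index function N
  set N : ℕ → ℕ := fun k => sSup {n | n ≤ k ∧ T n ≤ u k} with hNdef
  have hNbdd : ∀ k, BddAbove {n | n ≤ k ∧ T n ≤ u k} := fun k => ⟨k, fun n hn => hn.1⟩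
  have hNne : ∀ k, {n | n ≤ k ∧ T n ≤ u k}.Nonempty := by
    intro k
    exact ⟨0, Nat.zero_le k, le_trans (le_of_eq hu0def.symm) (humono k)⟩
  have hNmem : ∀ k, N k ≤ k ∧ T (N k) ≤ u k := fun k => Nat.sSup_mem (hNne k) (hNbdd k)
  have hNtop : Tendsto N atTop atTop := by
    rw [tendsto_atTop]
    intro n
    filter_upwards [eventually_ge_atTop n, hutop.eventually_ge_atTop (T n)] with k hk1 hk2
    exact le_csSup (hNbdd k) ⟨hk1, hk2⟩
  -- the weights
  set η : ℕ → ℝ := fun k => max ((1/2:ℝ)^(N k)) (Real.sqrt (u k / f (u k))) with hηdef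
  have hηpos : ∀ k, 0 < η k := fun k => lt_of_lt_of_le (by positivity) (le_max_left _ _)
  have hηle1 : ∀ k, η k ≤ 1 := by
    intro k
    apply max_le
    · exact pow_le_one₀ (by norm_num) (by norm_num)
    · rw [show (1:ℝ) = Real.sqrt 1 by simp]
      apply Real.sqrt_le_sqrt
      rw [div_le_one (hfupos k)]
      exact (hubase k).2
  have hη0 : Tendsto η atTop (nhds 0) := by
    have h1 : Tendsto (fun k => (1/2:ℝ)^(N k)) atTop (nhds 0) :=
      (tendsto_pow_atTop_nhds_zero_of_lt_one (by norm_num) (by norm_num)).comp hNtop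
    have h2 : Tendsto (fun k => u k / f (u k)) atTop (nhds 0) := by
      have h3 : Tendsto (fun k => f (u k) / u k) atTop atTop :=
        Φ.tendsto_atTop.comp hutop
      have h4 := h3.inv_tendsto_atTop
      simp only [Pi.inv_def, inv_div] at h4
      exact h4
    have h5 : Tendsto (fun k => Real.sqrt (u k / f (u k))) atTop (nhds 0) := by
      have := (Real.continuous_sqrt.tendsto 0).comp h2
      simpa [Function.comp_def] using this
    have h6 := h1.max h5
    rw [max_self] at h6
    exact h6
  -- slopes
  set m : ℕ → ℝ := fun k => (f (u (k+1)) - f (u k)) / (u (k+1) - u k) with hmdef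
  have hmlb : ∀ k, f (u k) / u k ≤ m k := by
    intro k
    have H := hconv.slope_mono_adjacent (Set.mem_univ (0:ℝ)) (Set.mem_univ (u (k+1)))
      (hupos k) (hspec k).1
    rw [← hfdef] at H
    rw [hfz] at H
    simpa using H
  have hmpos : ∀ k, 0 < m k := fun k =>
    lt_of_lt_of_le (div_pos (hfupos k) (hupos k)) (hmlb k)
  set s : ℕ → ℝ := fun k => η k * m k with hsdef
  set c : ℕ → ℝ := fun k => η k * (f (u k) - m k * u k) with hcdef
  have hspos : ∀ k, 0 < s k := fun k => mul_pos (hηpos k) (hmpos k)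
  have hcnp : ∀ k, c k ≤ 0 := by
    intro k
    apply mul_nonpos_of_nonneg_of_nonpos (hηpos k).le
    have := hmlb k
    rw [div_le_iff₀ (hupos k)] at this
    linarith
  -- superlinear slope bound
  have hslb : ∀ k, Real.sqrt (f (u k) / u k) ≤ s k := by
    intro k
    have h1 : Real.sqrt (u k / f (u k)) * (f (u k) / u k) = Real.sqrt (f (u k) / u k) := by
      rw [show u k / f (u k) = (f (u k) / u k)⁻¹ by rw [inv_div], Real.sqrt_inv]
      set A := f (u k) / u k with hA
      have hApos : 0 < A := div_pos (hfupos k) (hupos k)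
      rw [inv_mul_eq_div, Real.div_sqrt]
    calc Real.sqrt (f (u k) / u k) = Real.sqrt (u k / f (u k)) * (f (u k) / u k) := h1.symm
      _ ≤ η k * m k := by
        apply mul_le_mul (le_max_right _ _) (hmlb k) (div_nonneg (hf0 _) (hupos k).le)
          (hηpos k).le
  -- f of abs
  have hfabs : ∀ x : ℝ, f |x| = f x := by
    intro x
    rcases le_or_gt 0 x with hx | hx
    · rw [abs_of_nonneg hx]
    · rw [abs_of_neg hx]; exact Φ.even x
  -- the line bound
  have hline : ∀ k, ∀ y : ℝ, 0 ≤ y → s k * y + c k ≤ 2 * η k * f y := by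
    intro k y hy
    have hcore : s k * y + c k = η k * (f (u k) + m k * (y - u k)) := by
      rw [hsdef, hcdef]; ring
    rw [hcore]
    have hne : u (k+1) - u k ≠ 0 := by have := (hspec k).1; intro hcon; linarith [this]
    by_cases hin : u k ≤ y ∧ y ≤ u (k+1)
    · have h1 : m k * (y - u k) ≤ m k * (u (k+1) - u k) :=
        mul_le_mul_of_nonneg_left (by linarith [hin.2]) (hmpos k).le
      have h2 : m k * (u (k+1) - u k) = f (u (k+1)) - f (u k) := by
        rw [hmdef]; field_simp
      have h3 : f (u (k+1)) ≤ 2 * f (u k) := ((hspec k).2.2 (hfupos k)).1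
      have h4 : f (u k) ≤ f y := hmono _ _ (hupos k).le hin.1
      have h5 : f (u k) + m k * (y - u k) ≤ 2 * f y := by linarith
      calc η k * (f (u k) + m k * (y - u k)) ≤ η k * (2 * f y) :=
            mul_le_mul_of_nonneg_left h5 (hηpos k).le
        _ = 2 * η k * f y := by ring
    · have hout : y ≤ u k ∨ u (k+1) ≤ y := by
        rcases not_and_or.mp hin with h' | h'
        · exact Or.inl (le_of_not_ge h')
        · exact Or.inr (le_of_not_ge h')
      have h1 := aux_sec_out f hconv (hspec k).1 hout
      have h5 : f (u k) + m k * (y - u k) ≤ f y := by simp only [hmdef]; exact h1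
      have h6 : f y ≤ 2 * f y := by linarith [hf0 y]
      calc η k * (f (u k) + m k * (y - u k)) ≤ η k * (2 * f y) :=
            mul_le_mul_of_nonneg_left (by linarith) (hηpos k).le
        _ = 2 * η k * f y := by ring
  -- the functions g and ω
  set g : ℕ → ℝ → ℝ := fun k x => max 0 (s k * |x| + c k) with hgdef
  have hgnn : ∀ k x, 0 ≤ g k x := fun k x => le_max_left _ _
  have hgle' : ∀ k x, g k x ≤ 2 * η k * f x := by
    intro k x
    apply max_le
    · exact mul_nonneg (mul_nonneg (by norm_num) (hηpos k).le) (hf0 x)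
    · have := hline k |x| (abs_nonneg x)
      rwa [hfabs] at this
  have hgle2 : ∀ k x, g k x ≤ 2 * f x := by
    intro k x
    refine (hgle' k x).trans ?_
    nlinarith [hηle1 k, hf0 x, hηpos k]
  set ω : ℝ → ℝ := fun x => ⨆ k, g k x with hωdef
  have hbdd : ∀ x, BddAbove (Set.range fun k => g k x) := by
    intro x
    refine ⟨2 * f x, ?_⟩
    rintro _ ⟨k, rfl⟩
    exact hgle2 k x
  have hωub : ∀ x, ω x ≤ 2 * f x := fun x => ciSup_le fun k => hgle2 k x
  have hωnn : ∀ x, 0 ≤ ω x := fun x => le_trans (hgnn 0 x) (le_ciSup (hbdd x) 0)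
  have hgzero : ∀ k, g k 0 = 0 := by
    intro k
    rw [hgdef]
    simp only [abs_zero, mul_zero, zero_add]
    exact max_eq_left (hcnp k)
  have hω0 : ω 0 = 0 := by
    rw [hωdef]
    simp only [hgzero, ciSup_const]
  have hωeven : ∀ x : ℝ, ω (-x) = ω x := by
    intro x
    rw [hωdef]
    simp only [hgdef, abs_neg]
  have habs : ConvexOn ℝ Set.univ (fun x : ℝ => |x|) := by
    have := convexOn_univ_norm (E := ℝ); exact this
  have hgconv : ∀ k, ConvexOn ℝ Set.univ (g k) := by
    intro k
    have h1 : ConvexOn ℝ Set.univ (fun x : ℝ => s k * |x| + c k) := by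
      have h2 := (habs.smul (hspos k).le).add_const (c k)
      exact h2
    have h3 := (convexOn_const (0:ℝ) convex_univ).sup h1
    exact h3
  have hωconv : ConvexOn ℝ Set.univ ω := by
    refine ⟨convex_univ, ?_⟩
    intro x _ y _ a b ha hb hab
    refine ciSup_le fun k => ?_
    calc g k (a • x + b • y) ≤ a • g k x + b • g k y :=
          (hgconv k).2 (Set.mem_univ x) (Set.mem_univ y) ha hb hab
      _ ≤ a • ω x + b • ω y := by
          exact add_le_add (smul_le_smul_of_nonneg_left (le_ciSup (hbdd x) k) ha)
            (smul_le_smul_of_nonneg_left (le_ciSup (hbdd y) k) hb)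
  have hωcont : Continuous ω := by
    have := hωconv.continuousOn isOpen_univ
    rwa [continuousOn_univ] at this
  -- superlinearity of ω
  have hAtop : Tendsto (fun k => f (u k) / u k) atTop atTop := Φ.tendsto_atTop.comp hutop
  have hωsup : Tendsto (fun x => ω x / x) atTop atTop := by
    rw [tendsto_atTop]
    intro M
    obtain ⟨k, hk⟩ : ∃ k, M + 1 ≤ s k := by
      obtain ⟨k, hk⟩ := (hAtop.eventually_ge_atTop ((max (M+1) 0)^2)).exists
      refine ⟨k, ?_⟩
      have h2 : max (M+1) 0 ≤ Real.sqrt (f (u k) / u k) := by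
        rw [show max (M+1) 0 = Real.sqrt ((max (M+1) 0)^2) by
          rw [Real.sqrt_sq (le_max_right _ _)]]
        exact Real.sqrt_le_sqrt hk
      exact le_trans (le_trans (le_max_left _ _) h2) (hslb k)
    filter_upwards [eventually_ge_atTop (max 1 (-(c k)))] with x hx
    have hx1 : (1:ℝ) ≤ x := le_trans (le_max_left _ _) hx
    have hxc : -(c k) ≤ x := le_trans (le_max_right _ _) hx
    have hgx : M * x ≤ g k x := by
      have h1 : M * x ≤ s k * x + c k := by nlinarith
      refine le_trans h1 ?_
      have h2 : s k * x + c k = s k * |x| + c k := by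
        rw [abs_of_nonneg (by linarith : (0:ℝ) ≤ x)]
      rw [h2]
      exact le_max_right _ _
    have h3 : M * x ≤ ω x := le_trans hgx (le_ciSup (hbdd x) k)
    rw [le_div_iff₀ (by linarith : (0:ℝ) < x)]
    linarith
  -- behavior at 0
  have hωzero : Tendsto (fun x : ℝ => ω x / x) (nhdsWithin 0 {(0:ℝ)}ᶜ) (nhds 0) := by
    apply squeeze_zero_norm (a := fun x : ℝ => 2 * |f x / x|)
    · intro x
      rcases eq_or_ne x 0 with rfl | hx
      · simp [hω0]
      · rw [Real.norm_eq_abs, abs_div, abs_of_nonneg (hωnn x), abs_div,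
          abs_of_nonneg (hf0 x), ← mul_div_assoc]
        gcongr
        exact hωub x
    · have h1 := Φ.tendsto_zero.abs
      rw [abs_zero] at h1
      have h2 := h1.const_mul (2:ℝ)
      rw [mul_zero] at h2
      exact h2
  -- ω is small relative to f
  have hu0ge1 : (1:ℝ) ≤ u0 := (hu0 u0 le_rfl).2.2
  have hsmall : Tendsto (fun x => ω x / f x) atTop (nhds 0) := by
    rw [Metric.tendsto_nhds]
    intro ε hε
    obtain ⟨K, hK⟩ : ∃ K, ∀ k ≥ K, η k < ε / 4 := by
      have h1 := hη0.eventually (gt_mem_nhds (show (0:ℝ) < ε / 4 by linarith))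
      rw [eventually_atTop] at h1
      exact h1
    set S : ℝ := ∑ k ∈ Finset.range (K+1), s k with hSdef
    have hSk : ∀ k ≤ K, s k ≤ S :=
      fun k hk => Finset.single_le_sum (fun i _ => (hspos i).le)
        (Finset.mem_range.mpr (by omega))
    have hxf0 : Tendsto (fun x : ℝ => x / f x) atTop (nhds 0) := by
      have h4 := Φ.tendsto_atTop.inv_tendsto_atTop
      simp only [Pi.inv_def, inv_div] at h4
      exact h4
    have hSx : ∀ᶠ x in atTop, S * (x / f x) < ε / 2 := by
      have h5 := hxf0.const_mul S
      rw [mul_zero] at h5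
      exact h5.eventually (gt_mem_nhds (by linarith))
    filter_upwards [hSx, eventually_ge_atTop (max u0 1)] with x hx1 hx2
    have hx0 : (1:ℝ) ≤ x := le_trans (le_max_right _ _) hx2
    have hxu0 : u0 ≤ x := le_trans (le_max_left _ _) hx2
    have hfx1 : 1 ≤ f x := by linarith [(hu0 x hxu0).2.1]
    have hfxpos : (0:ℝ) < f x := by linarith
    have hSxfx : S * x < (ε / 2) * f x := by
      have he : S * (x / f x) = S * x / f x := by ring
      rw [he, div_lt_iff₀ hfxpos] at hx1
      linarith
    have hωbound : ω x ≤ (ε / 2) * f x := by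
      apply ciSup_le
      intro k
      rcases le_or_gt k K with hk | hk
      · have h6 : g k x ≤ s k * x := by
          apply max_le
          · exact mul_nonneg (hspos k).le (by linarith)
          · rw [abs_of_nonneg (by linarith : (0:ℝ) ≤ x)]
            linarith [hcnp k]
        have h7 : s k * x ≤ S * x := mul_le_mul_of_nonneg_right (hSk k hk) (by linarith)
        linarith
      · have h7 : g k x ≤ 2 * η k * f x := hgle' k x
        have h8 : η k < ε / 4 := hK k (by omega)
        have h9 : 2 * η k * f x ≤ 2 * (ε / 4) * f x := by nlinarith [(hηpos k).le]
        linarith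
    rw [Real.dist_eq, sub_zero, abs_of_nonneg (div_nonneg (hωnn x) (hf0 x)),
      div_lt_iff₀ hfxpos]
    nlinarith
  -- domination
  have hdom : ∀ x ≥ u0, phi x ≤ ω x := by
    intro x hx
    have hbddK : BddAbove {k : ℕ | u k ≤ x} := by
      have h1 := hutop.eventually_ge_atTop (x + 1)
      rw [eventually_atTop] at h1
      obtain ⟨j₀, hj₀⟩ := h1
      refine ⟨j₀, fun k hk => ?_⟩
      by_contra h'
      push_neg at h'
      have := hj₀ k h'.le
      have : u k ≤ x := hk
      linarith [hj₀ k h'.le]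
    have hne2 : {k : ℕ | u k ≤ x}.Nonempty := ⟨0, by rw [Set.mem_setOf_eq, hu00]; exact hx⟩
    set K := sSup {k : ℕ | u k ≤ x} with hKdef
    have hKmem : u K ≤ x := Nat.sSup_mem hne2 hbddK
    have hKsucc : x < u (K+1) := by
      by_contra h'
      push_neg at h'
      have h2 : K + 1 ≤ K := le_csSup hbddK h'
      omega
    have hTK : T (N K) ≤ u K := (hNmem K).2
    have hphix : |phi x| ≤ (1/2:ℝ)^(N K) * f x := (hTp (N K) x (le_trans hTK hKmem)).1
    have h1 : phi x ≤ η K * f x := by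
      calc phi x ≤ |phi x| := le_abs_self _
        _ ≤ (1/2:ℝ)^(N K) * f x := hphix
        _ ≤ η K * f x := mul_le_mul_of_nonneg_right (le_max_left _ _) (hf0 x)
    have h2 : f x ≤ f (u K) + m K * (x - u K) := by
      have h3 := aux_sec_in f hconv (hspec K).1 hKmem hKsucc.le
      simp only [hmdef]
      exact h3
    have h3 : η K * f x ≤ η K * (f (u K) + m K * (x - u K)) :=
      mul_le_mul_of_nonneg_left h2 (hηpos K).le
    have hxpos : (0:ℝ) < x := by linarith
    have h4 : η K * (f (u K) + m K * (x - u K)) = s K * |x| + c K := by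
      rw [abs_of_nonneg hxpos.le, hsdef, hcdef]; ring
    calc phi x ≤ η K * f x := h1
      _ ≤ η K * (f (u K) + m K * (x - u K)) := h3
      _ = s K * |x| + c K := h4
      _ ≤ g K x := le_max_right _ _
      _ ≤ ω x := le_ciSup (hbdd x) K
  exact ⟨⟨ω, hωnn, hωconv, hωcont, hωeven, hω0, hωsup, hωzero⟩, u0,
    by linarith, hsmall, hdom⟩

end
end

section
/- Let d ≥ 1, D := {1,...,d}, let B ⊆ D be nonempty with B' := D \ B, let n ≥ 1, and define g : I^d → ℝ by g(x) := ∏_{i∈B} D_{2^{2n+1}}(x_i)/2. Then for every x ∈ I^d, (L_{p_n(B)}∘R_{p_n(B')})(g; x) = 2^{−|B|} ∏_{i∈B} F_{p_n}(x_i), where p_n(B) denotes the index vector all of whose coordinates equal p_n. -/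
open MeasureTheory Filter

noncomputable section

lemma measurable_r0 : Measurable r0 :=
  Measurable.ite (measurableSet_lt measurable_fract measurable_const)
    measurable_const measurable_const

lemma abs_r0_le (x : ℝ) : |r0 x| ≤ 1 := by unfold r0; split <;> norm_num

lemma r0_sq (x : ℝ) : r0 x * r0 x = 1 := by unfold r0; split <;> norm_num

lemma rademacher_sq (k : ℕ) (x : ℝ) : rademacher k x * rademacher k x = 1 := r0_sq _

lemma measurable_rademacher (k : ℕ) : Measurable (rademacher k) :=
  measurable_r0.comp (measurable_id.const_mul _)

lemma measurable_walsh (n : ℕ) : Measurable (walsh n) := by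
  unfold walsh
  apply Finset.measurable_prod
  intro k _
  by_cases h : n.testBit k <;> simp [h, measurable_rademacher, measurable_const]

lemma abs_walsh_le_one (n : ℕ) (x : ℝ) : |walsh n x| ≤ 1 := by
  rw [walsh, Finset.abs_prod]
  apply Finset.prod_le_one (fun k _ => abs_nonneg _)
  intro k _
  split
  · exact abs_r0_le _
  · norm_num

lemma integrableOn_Ico_of_bounded {f : ℝ → ℝ} (hm : Measurable f) (C : ℝ)
    (hb : ∀ x, |f x| ≤ C) {a b : ℝ} : IntegrableOn f (Set.Ico a b) volume := by
  refine Integrable.mono' (g := fun _ => C) (integrableOn_const measure_Ico_lt_top.ne)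
    hm.aestronglyMeasurable (ae_of_all _ fun x => ?_)
  simpa [Real.norm_eq_abs] using hb x

lemma walsh_intervalIntegrable (n : ℕ) (a b : ℝ) :
    IntervalIntegrable (walsh n) volume a b := by
  rw [intervalIntegrable_iff]
  refine Integrable.mono' (g := fun _ => (1:ℝ))
    (integrableOn_const ?_)
    (measurable_walsh n).aestronglyMeasurable (ae_of_all _ fun x => ?_)
  · exact ((measure_mono Set.uIoc_subset_uIcc).trans_lt isCompact_uIcc.measure_lt_top).ne
  · simpa [Real.norm_eq_abs] using abs_walsh_le_one n x

lemma walsh_eq_prod {n M : ℕ} (h : n < 2 ^ M) (x : ℝ) :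
    walsh n x = ∏ k ∈ Finset.range M, (if n.testBit k then rademacher k x else 1) := by
  unfold walsh
  rcases le_total (n + 1) M with hM | hM
  · refine Finset.prod_subset (Finset.range_subset_range.2 hM) fun k hk hk' => ?_
    have hb : n.testBit k = false := Nat.testBit_lt_two_pow
      (lt_of_lt_of_le (Nat.lt_two_pow_self (n := n)) (Nat.pow_le_pow_right (by norm_num)
        (by simp only [Finset.mem_range, not_lt] at hk'; omega)))
    simp [hb]
  · refine (Finset.prod_subset (Finset.range_subset_range.2 hM) fun k hk hk' => ?_).symm
    have hb : n.testBit k = false := Nat.testBit_lt_two_pow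
      (lt_of_lt_of_le h (Nat.pow_le_pow_right (by norm_num)
        (by simp only [Finset.mem_range, not_lt] at hk'; omega)))
    simp [hb]

lemma walsh_zero (x : ℝ) : walsh 0 x = 1 := by simp [walsh]

lemma rademacher_succ (k : ℕ) (x : ℝ) : rademacher (k + 1) x = rademacher k (2 * x) := by
  unfold rademacher; congr 1; ring

lemma walsh_rec {n : ℕ} (hn : n ≠ 0) (x : ℝ) :
    walsh n x = (if n.testBit 0 then r0 x else 1) * walsh (n / 2) (2 * x) := by
  rw [walsh, Finset.prod_range_succ', mul_comm]
  congr 1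
  · simp [rademacher]
  · rw [walsh_eq_prod (M := n) (Nat.lt_of_le_of_lt (Nat.div_le_self n 2) (Nat.lt_two_pow_self (n := n))) (2 * x)]
    refine Finset.prod_congr rfl fun k _ => ?_
    rw [Nat.testBit_add_one, rademacher_succ]

lemma walsh_periodic (n : ℕ) : Function.Periodic (walsh n) 1 := by
  intro x
  unfold walsh
  refine Finset.prod_congr rfl fun k _ => ?_
  have h : (2:ℝ) ^ k * (x + 1) = 2 ^ k * x + ((2 ^ k : ℕ) : ℝ) := by push_cast; ring
  unfold rademacher r0
  rw [h, Int.fract_add_natCast]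

lemma r0_left {x : ℝ} (h0 : 0 ≤ x) (h1 : x < 1/2) : r0 x = 1 := by
  unfold r0
  rw [Int.fract_eq_self.2 ⟨h0, by linarith⟩]
  exact if_pos h1

lemma r0_right {x : ℝ} (h0 : 1/2 ≤ x) (h1 : x < 1) : r0 x = -1 := by
  unfold r0
  rw [Int.fract_eq_self.2 ⟨by linarith, h1⟩]
  exact if_neg (not_lt.2 h0)

lemma ae_ne (c : ℝ) : ∀ᵐ x : ℝ ∂(volume : Measure ℝ), x ≠ c := by
  rw [ae_iff]
  simp only [ne_eq, not_not, Set.setOf_eq_eq_singleton]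
  exact Real.volume_singleton

lemma integral_walsh (n : ℕ) : ∫ x in (0:ℝ)..1, walsh n x = if n = 0 then 1 else 0 := by
  induction n using Nat.strong_induction_on with
  | _ n ih =>
  rcases eq_or_ne n 0 with rfl | hn
  · simp [walsh_zero]
  · rw [if_neg hn]
    have hsplit : ∫ x in (0:ℝ)..1, walsh n x
        = (∫ x in (0:ℝ)..(1/2), walsh n x) + ∫ x in (1/2:ℝ)..1, walsh n x :=
      (intervalIntegral.integral_add_adjacent_intervals
        (walsh_intervalIntegrable n 0 (1/2)) (walsh_intervalIntegrable n (1/2) 1)).symm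
    set ε : ℝ := if n.testBit 0 then -1 else 1 with hε
    have h1 : ∫ x in (0:ℝ)..(1/2), walsh n x = ∫ x in (0:ℝ)..(1/2), walsh (n / 2) (2 * x) := by
      refine intervalIntegral.integral_congr_ae ?_
      filter_upwards [ae_ne (1/2 : ℝ)] with x hx hmem
      rw [Set.uIoc_of_le (by norm_num)] at hmem
      rw [walsh_rec hn, r0_left hmem.1.le (lt_of_le_of_ne hmem.2 hx)]
      simp
    have h2 : ∫ x in (1/2:ℝ)..1, walsh n x = ε * ∫ x in (1/2:ℝ)..1, walsh (n / 2) (2 * x) := by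
      rw [← intervalIntegral.integral_const_mul]
      refine intervalIntegral.integral_congr_ae ?_
      filter_upwards [ae_ne (1 : ℝ)] with x hx hmem
      rw [Set.uIoc_of_le (by norm_num)] at hmem
      rw [walsh_rec hn, r0_right hmem.1.le (lt_of_le_of_ne hmem.2 hx), hε]

    have hc : ∀ a b : ℝ, ∫ x in a..b, walsh (n / 2) (2 * x)
        = 2⁻¹ * ∫ x in (2*a)..(2*b), walsh (n / 2) x := by
      intro a b
      rw [intervalIntegral.integral_comp_mul_left (walsh (n / 2)) (two_ne_zero)]
      simp
    have hper : ∫ x in (1:ℝ)..2, walsh (n / 2) x = ∫ x in (0:ℝ)..1, walsh (n / 2) x := by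
      have h := (walsh_periodic (n / 2)).intervalIntegral_add_eq (t := 1) (s := 0)
      norm_num at h
      exact h
    rw [hsplit, h1, h2, hc, hc]
    norm_num
    rw [hper]
    rcases Nat.even_or_odd n with he | ho
    · have hb : n.testBit 0 = false := by
        rw [Nat.testBit_zero]
        simp [Nat.even_iff.1 he]
      obtain ⟨k, hk⟩ := he
      have hn2 : n / 2 ≠ 0 := by omega
      rw [ih (n / 2) (by omega), if_neg hn2]
      simp [hε, hb]
    · have hb : n.testBit 0 = true := by
        rw [Nat.testBit_zero]
        simp [Nat.odd_iff.1 ho]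
      simp [hε, hb]

lemma setIntegral_walsh (n : ℕ) :
    ∫ x in Set.Ico (0:ℝ) 1, walsh n x = if n = 0 then 1 else 0 := by
  rw [setIntegral_congr_set (Ico_ae_eq_Ioc (α := ℝ) (μ := volume)),
    ← intervalIntegral.integral_of_le (zero_le_one)]
  exact integral_walsh n

lemma walsh_mul (a b : ℕ) (x : ℝ) : walsh a x * walsh b x = walsh (a ^^^ b) x := by
  have hM : ∀ m : ℕ, m ≤ a + b → m < 2 ^ (a + b + 1) := fun m hm =>
    lt_of_le_of_lt hm (lt_trans (Nat.lt_two_pow_self (n := a + b)) (Nat.pow_lt_pow_right (by norm_num) (by omega)))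
  have ha : a < 2 ^ (a + b + 1) := hM a (by omega)
  have hb : b < 2 ^ (a + b + 1) := hM b (by omega)
  have hx : a ^^^ b < 2 ^ (a + b + 1) := Nat.xor_lt_two_pow ha hb
  rw [walsh_eq_prod ha, walsh_eq_prod hb, walsh_eq_prod hx, ← Finset.prod_mul_distrib]
  refine Finset.prod_congr rfl fun k _ => ?_
  rw [Nat.testBit_xor]
  cases ha' : a.testBit k <;> cases hb' : b.testBit k <;>
    simp [rademacher_sq]

lemma integral_walsh_mul (a b : ℕ) :
    ∫ x in Set.Ico (0:ℝ) 1, walsh a x * walsh b x = if a = b then 1 else 0 := by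
  simp_rw [walsh_mul]
  rw [setIntegral_walsh]
  simp [xor_eq_zero_iff]

lemma integral_dirichlet_mul_walsh (N j : ℕ) :
    ∫ x in Set.Ico (0:ℝ) 1, dirichletKernel N x * walsh j x = if j < N then 1 else 0 := by
  unfold dirichletKernel
  simp_rw [Finset.sum_mul]
  rw [integral_finset_sum]
  · rw [Finset.sum_congr rfl fun k _ => integral_walsh_mul k j]
    simp [Finset.sum_ite_eq]
  · intro k _
    refine integrableOn_Ico_of_bounded ((measurable_walsh k).mul (measurable_walsh j)) 1
      fun x => ?_
    rw [Pi.mul_apply, abs_mul]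
    exact mul_le_one₀ (abs_walsh_le_one _ _) (abs_nonneg _) (abs_walsh_le_one _ _)

lemma cube_integral_prod {d : ℕ} (f : Fin d → ℝ → ℝ) :
    ∫ x, ∏ i, f i (x i) ∂(cubeMeasure d) = ∏ i, ∫ t in Set.Ico (0:ℝ) 1, f i t := by
  have hms : MeasurableSet (unitCube d) := MeasurableSet.univ_pi fun _ => measurableSet_Ico
  rw [cubeMeasure, ← integral_indicator hms]
  have h : (fun x : Fin d → ℝ => (unitCube d).indicator (fun y => ∏ i, f i (y i)) x)
      = fun x => ∏ i, (Set.Ico (0:ℝ) 1).indicator (f i) (x i) := by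
    funext x
    by_cases hx : x ∈ unitCube d
    · rw [Set.indicator_of_mem hx]
      exact Finset.prod_congr rfl fun i _ =>
        (Set.indicator_of_mem (Set.mem_univ_pi.1 hx i) _).symm
    · rw [Set.indicator_of_notMem hx]
      obtain ⟨i, hi⟩ : ∃ i, x i ∉ Set.Ico (0:ℝ) 1 := by
        by_contra hcon
        push_neg at hcon
        exact hx (Set.mem_univ_pi.2 hcon)
      exact (Finset.prod_eq_zero (Finset.mem_univ i) (Set.indicator_of_notMem hi _)).symm
  rw [h, volume_pi, MeasureTheory.integral_fintype_prod_eq_prod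
    (fun i => (Set.Ico (0:ℝ) 1).indicator (f i))]
  exact Finset.prod_congr rfl fun i _ => integral_indicator measurableSet_Ico

lemma walshCoef_g {d : ℕ} (B : Finset (Fin d)) (M : ℕ) (j : Fin d → ℕ) :
    walshCoef (fun y => ∏ i ∈ B, dirichletKernel M (y i) / 2) j
      = ∏ i, (if i ∈ B then (if j i < M then (1:ℝ)/2 else 0)
          else (if j i = 0 then 1 else 0)) := by
  unfold walshCoef
  have hpt : ∀ x : Fin d → ℝ,
      (∏ i ∈ B, dirichletKernel M (x i) / 2) * ∏ i, walsh (j i) (x i)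
      = ∏ i, ((if i ∈ B then dirichletKernel M (x i) / 2 else 1) * walsh (j i) (x i)) := by
    intro x
    rw [Finset.prod_mul_distrib]
    congr 1
    rw [Finset.prod_ite_mem, Finset.univ_inter]
  simp_rw [hpt]
  rw [cube_integral_prod
    (fun i t => (if i ∈ B then dirichletKernel M t / 2 else 1) * walsh (j i) t)]
  refine Finset.prod_congr rfl fun i _ => ?_
  by_cases hi : i ∈ B
  · simp only [hi, if_true]
    have h1 : ∀ t : ℝ, dirichletKernel M t / 2 * walsh (j i) t
        = dirichletKernel M t * walsh (j i) t / 2 := fun t => by ring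
    simp_rw [h1]
    rw [integral_div, integral_dirichlet_mul_walsh]
    split <;> norm_num
  · simp only [hi, if_false, one_mul]
    rw [setIntegral_walsh]

lemma rect_g {d : ℕ} (B : Finset (Fin d)) (M : ℕ) (N : Fin d → ℕ) (hN1 : ∀ i, 1 ≤ N i)
    (hNM : ∀ i ∈ B, N i ≤ M) (x : Fin d → ℝ) :
    rectPartialSum (fun y => ∏ i ∈ B, dirichletKernel M (y i) / 2) N x
      = ∏ i ∈ B, dirichletKernel (N i) (x i) / 2 := by
  unfold rectPartialSum
  have hterm : ∀ j ∈ Fintype.piFinset (fun i => Finset.range (N i)),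
      walshCoef (fun y => ∏ i ∈ B, dirichletKernel M (y i) / 2) j * ∏ i, walsh (j i) (x i)
      = ∏ i, ((if i ∈ B then (if j i < M then (1:ℝ)/2 else 0)
          else (if j i = 0 then 1 else 0)) * walsh (j i) (x i)) := by
    intro j _
    rw [walshCoef_g, ← Finset.prod_mul_distrib]
  rw [Finset.sum_congr rfl hterm]
  have hswap := Finset.prod_univ_sum (fun i => Finset.range (N i))
    (fun i a => (if i ∈ B then (if a < M then (1:ℝ)/2 else 0)
      else (if a = 0 then 1 else 0)) * walsh a (x i))
  rw [← hswap]
  rw [show (∏ i ∈ B, dirichletKernel (N i) (x i) / 2)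
      = ∏ i, (if i ∈ B then dirichletKernel (N i) (x i) / 2 else 1) by
    rw [Finset.prod_ite_mem, Finset.univ_inter]]
  refine Finset.prod_congr rfl fun i _ => ?_
  by_cases hi : i ∈ B
  · simp only [hi, if_true]
    have h1 : ∀ a ∈ Finset.range (N i),
        (if a < M then (1:ℝ)/2 else 0) * walsh a (x i) = walsh a (x i) / 2 := by
      intro a ha
      rw [if_pos (lt_of_lt_of_le (Finset.mem_range.1 ha) (hNM i hi))]
      ring
    rw [Finset.sum_congr rfl h1, ← Finset.sum_div]
    rfl
  · simp only [hi, if_false]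
    have h1 : ∀ a ∈ Finset.range (N i),
        (if a = 0 then (1:ℝ) else 0) * walsh a (x i)
        = if a = 0 then walsh a (x i) else 0 := by
      intro a _
      split <;> simp
    rw [Finset.sum_congr rfl h1, Finset.sum_ite_eq' (Finset.range (N i)) 0
      (fun a => walsh a (x i))]
    rw [if_pos (Finset.mem_range.2 (hN1 i)), walsh_zero]

lemma pIdx_le (n : ℕ) : pIdx n ≤ 2 ^ (2 * n + 1) := by
  induction n with
  | zero => simp [pIdx]
  | succ m ih =>
    have h : pIdx (m + 1) = pIdx m + 4 ^ (m + 1) := by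
      unfold pIdx; rw [Finset.sum_range_succ]
    have h4 : (4:ℕ) ^ (m + 1) = 2 * 2 ^ (2 * m + 1) := by
      rw [show (4:ℕ) = 2^2 by norm_num, ← pow_mul]
      rw [show 2 * (m+1) = (2*m+1) + 1 by ring, pow_succ]
      ring
    have h2 : (2:ℕ) ^ (2 * (m+1) + 1) = 4 * 2 ^ (2 * m + 1) := by
      rw [show 2 * (m+1) + 1 = (2*m+1) + 2 by ring, pow_add]
      ring
    omega

lemma two_le_pIdx {n : ℕ} (hn : 1 ≤ n) : 2 ≤ pIdx n := by
  have h : pIdx n = pIdx (n-1) + 4 ^ n := by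
    unfold pIdx
    rw [show n + 1 = (n - 1) + 1 + 1 by omega, Finset.sum_range_succ]
    congr 2
    omega
  have h1 : 1 ≤ pIdx (n-1) := by
    unfold pIdx
    have : 0 ∈ Finset.range (n - 1 + 1) := Finset.mem_range.2 (by omega)
    calc 1 = 4^0 := rfl
    _ ≤ _ := Finset.single_le_sum (fun k _ => Nat.zero_le _) this
  have h2 : 1 ≤ 4 ^ n := Nat.one_le_two_pow.trans (Nat.pow_le_pow_left (by norm_num) n)
  omega

lemma logSum_pos {p : ℕ} (hp : 2 ≤ p) : 0 < logSum p := by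
  unfold logSum
  refine Finset.sum_pos (fun k hk => ?_) ⟨1, Finset.mem_Icc.2 (by omega)⟩
  have : 1 ≤ k := (Finset.mem_Icc.1 hk).1
  positivity


/-- pointwise identity. The mixed logarithmic mean of
`⊗_{i∈B} D_{2^{2n+1}}/2` at the index `p_n` equals `2^{-|B|} ∏_{i∈B} F_{p_n}(x_i)`. -/
theorem stmt12 (d : ℕ) (hd : 1 ≤ d) (B : Finset (Fin d)) (hB : B.Nonempty)
    (n : ℕ) (hn : 1 ≤ n) :
    ∀ x ∈ unitCube d,
      mixedLogMean B (fun y => ∏ i ∈ B, dirichletKernel (2 ^ (2 * n + 1)) (y i) / 2)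
        (fun _ => pIdx n) x
      = (1 / 2 : ℝ) ^ B.card * ∏ i ∈ B, FKernel (pIdx n) (x i) := by
  intro x _
  set p := pIdx n with hp
  set M := 2 ^ (2 * n + 1) with hM
  have hp2 : 2 ≤ p := two_le_pIdx hn
  have hpM : p ≤ M := pIdx_le n
  have hls : logSum p ≠ 0 := ne_of_gt (logSum_pos hp2)
  unfold mixedLogMean
  have hrect : ∀ i ∈ Fintype.piFinset (fun _ : Fin d => Finset.Ico 1 p),
      rectPartialSum (fun y => ∏ k ∈ B, dirichletKernel M (y k) / 2)
        (fun j => if j ∈ B then p - i j else i j) x / ∏ j, (i j : ℝ)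
      = ∏ j, ((if j ∈ B then dirichletKernel (p - i j) (x j) / 2 else 1) / (i j : ℝ)) := by
    intro i hi
    have hmem : ∀ j, i j ∈ Finset.Ico 1 p := fun j => by
      have := Fintype.mem_piFinset.1 hi j
      exact this
    have hb : ∀ j, 1 ≤ i j ∧ i j < p := fun j => by
      have := Finset.mem_Ico.1 (hmem j); exact this
    rw [rect_g B M _ (fun j => by rcases hb j with ⟨h1, h2⟩; split <;> omega)
      (fun j hj => by rw [if_pos hj]; omega) x]
    rw [Finset.prod_congr rfl (fun j hj => by rw [if_pos hj] :
      ∀ j ∈ B, dirichletKernel (if j ∈ B then p - i j else i j) (x j) / 2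
        = dirichletKernel (p - i j) (x j) / 2)]
    conv_rhs => rw [Finset.prod_div_distrib]
    congr 1
    rw [Finset.prod_ite_mem, Finset.univ_inter]
  rw [Finset.sum_congr rfl hrect]
  have hswap := Finset.prod_univ_sum (fun _ : Fin d => Finset.Ico 1 p)
    (fun j a => (if j ∈ B then dirichletKernel (p - a) (x j) / 2 else 1) / (a : ℝ))
  rw [← hswap]
  have hsum : ∀ j : Fin d,
      (∑ a ∈ Finset.Ico 1 p, (if j ∈ B then dirichletKernel (p - a) (x j) / 2 else 1) / (a : ℝ))
      = logSum p * (if j ∈ B then FKernel p (x j) / 2 else 1) := by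
    intro j
    by_cases hj : j ∈ B
    · simp only [hj, if_true]
      have h1 : ∀ a ∈ Finset.Ico 1 p, (dirichletKernel (p - a) (x j) / 2) / (a : ℝ)
          = (dirichletKernel (p - a) (x j) / (a : ℝ)) / 2 := fun a _ => by ring
      rw [Finset.sum_congr rfl h1, ← Finset.sum_div, FKernel]
      field_simp
    · simp only [hj, if_false, mul_one]
      have h2 : Finset.Icc 1 (p - 1) = Finset.Ico 1 p := by
        rw [← Finset.Ico_add_one_right_eq_Icc]
        congr 1
        omega
      rw [logSum, h2]
  rw [Finset.prod_congr rfl (fun j _ => hsum j), Finset.prod_mul_distrib]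
  rw [← mul_assoc, inv_mul_cancel₀ (by
    rw [Finset.prod_const]
    exact pow_ne_zero _ hls), one_mul]
  rw [Finset.prod_ite_mem, Finset.univ_inter, Finset.prod_div_distrib, Finset.prod_const]
  rw [one_div, inv_pow, div_eq_mul_inv, mul_comm]


end
end
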